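/- Let G be a topological group that is topologically finitely generated, i.e., there is a finite subset of G whose generated subgroup is dense in G. Then for every natural number d, the set of open subgroups of G of index at most d is finite. -/

import Mathlib

/-- A group with a finite generating set has finitely many homs into a finite group. -/
lemma aux_finite_homs {D P : Type*} [Group D] [Group P] [Finite P] {T : Set D}
    (hT : T.Finite) (h : Subgroup.closure T = ⊤) : Finite (D →* P) := by
  have : Finite T := hT
  refine Finite.of_injective (fun (f : D →* P) (t : T) => f t) ?_
  intro f g hfg
  exact MonoidHom.eq_of_eqOn_dense h (fun x hx => congrFun hfg ⟨x, hx⟩)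

/-- A group with a finite generating set has finitely many subgroups of index at most `d`. -/
lemma aux_finite_subgroups {D : Type*} [Group D] {T : Set D} (hT : T.Finite)
    (h : Subgroup.closure T = ⊤) (d : ℕ) :
    {K : Subgroup D | Cardinal.mk (D ⧸ K) ≤ d}.Finite := by
  classical
  haveI : Finite (D →* Equiv.Perm (Fin d)) := aux_finite_homs hT h
  rw [Set.finite_coe_iff.symm]
  -- For each K in the set, choose an embedding of D ⧸ K into Fin d.
  have hemb : ∀ K : {K : Subgroup D | Cardinal.mk (D ⧸ K) ≤ d},
      Nonempty ((D ⧸ (K : Subgroup D)) ↪ Fin d) := by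
    intro K
    have hfin : Finite (D ⧸ (K : Subgroup D)) := by
      rw [← Cardinal.lt_aleph0_iff_finite]
      exact lt_of_le_of_lt K.2 (Cardinal.nat_lt_aleph0 d)
    have hK : Cardinal.mk (D ⧸ (K : Subgroup D)) ≤ (d : Cardinal) := K.2
    have hcard : Nat.card (D ⧸ (K : Subgroup D)) ≤ d := by
      have := Cardinal.toNat_le_toNat hK (Cardinal.nat_lt_aleph0 d)
      simpa [Nat.card] using this
    exact ⟨(Finite.equivFin _).toEmbedding.trans (Fin.castLEEmb hcard)⟩
  have e := fun K => (hemb K).some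
  refine Finite.of_injective (fun K =>
    (((Equiv.Perm.viaEmbeddingHom (e K)).comp
      (MulAction.toPermHom D (D ⧸ (K : Subgroup D))),
      e K ((1 : D) : D ⧸ (K : Subgroup D))) :
      (D →* Equiv.Perm (Fin d)) × Fin d)) ?_
  intro K₁ K₂ hK
  simp only [Prod.mk.injEq] at hK
  obtain ⟨hhom, hpt⟩ := hK
  have key : ∀ (K : {K : Subgroup D | Cardinal.mk (D ⧸ K) ≤ d}) (g : D),
      g ∈ (K : Subgroup D) ↔
        ((Equiv.Perm.viaEmbeddingHom (e K)).comp
          (MulAction.toPermHom D (D ⧸ (K : Subgroup D)))) g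
            (e K ((1 : D) : D ⧸ (K : Subgroup D)))
          = e K ((1 : D) : D ⧸ (K : Subgroup D)) := by
    intro K g
    have : ((Equiv.Perm.viaEmbeddingHom (e K)).comp
        (MulAction.toPermHom D (D ⧸ (K : Subgroup D)))) g
          (e K ((1 : D) : D ⧸ (K : Subgroup D)))
        = e K (g • ((1 : D) : D ⧸ (K : Subgroup D))) := by
      simp [Equiv.Perm.viaEmbeddingHom_apply, Equiv.Perm.viaEmbedding_apply]
    rw [this]
    constructor
    · intro hg
      congr 1
      have : g • ((1 : D) : D ⧸ (K : Subgroup D)) = ((g * 1 : D) : D ⧸ (K : Subgroup D)) :=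
        rfl
      rw [this, mul_one, eq_comm, QuotientGroup.eq]
      simpa using hg
    · intro hg
      have := (e K).injective hg
      have : ((g * 1 : D) : D ⧸ (K : Subgroup D)) = ((1 : D) : D ⧸ (K : Subgroup D)) := this
      rw [QuotientGroup.eq] at this
      simpa using this
  ext g
  rw [key K₁ g, key K₂ g, hhom, hpt]

theorem stmt_13 (G : Type*) [Group G] [TopologicalSpace G] [IsTopologicalGroup G]
    (htfg : ∃ S : Finset G, Dense ((Subgroup.closure (S : Set G) : Subgroup G) : Set G))
    (d : ℕ) :
    {H : Subgroup G | IsOpen (H : Set G) ∧ Cardinal.mk (G ⧸ H) ≤ d}.Finite := by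
  classical
  obtain ⟨S, hS⟩ := htfg
  set D : Subgroup G := Subgroup.closure (S : Set G) with hD
  -- generating set of ↥D
  have hTfin : (((↑) : D → G) ⁻¹' (S : Set G)).Finite :=
    Set.Finite.preimage (Subtype.coe_injective.injOn) S.finite_toSet
  have hTtop : Subgroup.closure (((↑) : D → G) ⁻¹' (S : Set G)) = ⊤ :=
    Subgroup.closure_closure_coe_preimage
  have hfin := aux_finite_subgroups hTfin hTtop d
  -- map H to its intersection with D, viewed as subgroup of ↥D
  refine Set.Finite.of_finite_image (f := fun H : Subgroup G => H.subgroupOf D) ?_ ?_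
  · refine hfin.subset ?_
    rintro K ⟨H, ⟨hopen, hcard⟩, rfl⟩
    -- embed ↥D ⧸ H.subgroupOf D into G ⧸ H
    have : Function.Injective
        (fun q : D ⧸ H.subgroupOf D => Quotient.liftOn' q
          (fun x : D => ((x : G) : G ⧸ H))
          (fun a b hab => by
            rw [QuotientGroup.eq]
            have : a⁻¹ * b ∈ H.subgroupOf D := QuotientGroup.leftRel_apply.mp hab
            simpa [Subgroup.mem_subgroupOf] using this)) := by
      intro q₁ q₂ hq
      obtain ⟨a, rfl⟩ := Quotient.exists_rep q₁
      obtain ⟨b, rfl⟩ := Quotient.exists_rep q₂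
      simp only [Quotient.liftOn'_mk''] at hq
      rw [QuotientGroup.eq] at hq
      apply Quotient.sound'
      rw [QuotientGroup.leftRel_apply]
      simpa [Subgroup.mem_subgroupOf] using hq
    calc Cardinal.mk (D ⧸ H.subgroupOf D) ≤ Cardinal.mk (G ⧸ H) :=
          Cardinal.mk_le_of_injective this
      _ ≤ d := hcard
  · -- injectivity on open subgroups
    rintro H₁ ⟨h₁, -⟩ H₂ ⟨h₂, -⟩ heq
    have heq' : H₁.subgroupOf D = H₂.subgroupOf D := heq
    have hinf : H₁ ⊓ D = H₂ ⊓ D := by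
      rw [← Subgroup.subgroupOf_map_subtype, ← Subgroup.subgroupOf_map_subtype, heq']
    have hdense : Dense (D : Set G) := hS
    have hclos : ∀ (H : Subgroup G), IsOpen (H : Set G) →
        (H : Set G) = closure ((H : Set G) ∩ (D : Set G)) := by
      intro H hH
      apply Set.Subset.antisymm
      · exact hdense.open_subset_closure_inter hH
      · have : IsClosed (H : Set G) := Subgroup.isClosed_of_isOpen H hH
        calc closure ((H : Set G) ∩ (D : Set G)) ⊆ closure (H : Set G) :=
              closure_mono Set.inter_subset_left
          _ = (H : Set G) := this.closure_eq
    have : (H₁ : Set G) = (H₂ : Set G) := by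
      rw [hclos H₁ h₁, hclos H₂ h₂]
      have hss : (H₁ : Set G) ∩ (D : Set G) = (H₂ : Set G) ∩ (D : Set G) := by
        simpa [Subgroup.coe_inf] using congrArg (fun K : Subgroup G => (K : Set G)) hinf
      rw [hss]
    exact SetLike.coe_injective this
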